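/- arXiv:1609.01773 — 3 statements merged into one kernel-verified Lean document; each statement's English description precedes it below -/
import Mathlib

section
/- Let g be a finite-dimensional complex semisimple Lie algebra realized inside M_n(ℂ) so that it is closed under conjugate transpose x ↦ x*. Equip g with the inner product ⟨x,y⟩ = B(x, y*), where B is the Killing form. Then for any Lie algebra automorphism g of 𝔤, its adjoint with respect to this inner product is σ ∘ g⁻¹ ∘ σ where σ(x) = x*, and this adjoint is again a Lie algebra automorphism of 𝔤. In particular Aut(𝔤) is closed under taking adjoints. -/
attribute [local instance 100] LieRing.ofAssociativeRing

/-- The conjugate-transpose map on a Lie subalgebra of matrices closed under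
conjugate transpose. -/
def sigmaStar {n : ℕ} (L : LieSubalgebra ℂ (Matrix (Fin n) (Fin n) ℂ))
    (hσ : ∀ x ∈ L, star x ∈ L) : L → L :=
  fun y => ⟨star (y : Matrix (Fin n) (Fin n) ℂ), hσ _ y.2⟩

lemma sigmaStar_coe {n : ℕ} (L : LieSubalgebra ℂ (Matrix (Fin n) (Fin n) ℂ))
    (hσ : ∀ x ∈ L, star x ∈ L) (y : L) :
    (sigmaStar L hσ y : Matrix (Fin n) (Fin n) ℂ) = star (y : Matrix (Fin n) (Fin n) ℂ) := rfl

lemma sigmaStar_sigmaStar {n : ℕ} (L : LieSubalgebra ℂ (Matrix (Fin n) (Fin n) ℂ))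
    (hσ : ∀ x ∈ L, star x ∈ L) (y : L) :
    sigmaStar L hσ (sigmaStar L hσ y) = y := by
  apply Subtype.ext
  simp [sigmaStar_coe]

lemma sigmaStar_add {n : ℕ} (L : LieSubalgebra ℂ (Matrix (Fin n) (Fin n) ℂ))
    (hσ : ∀ x ∈ L, star x ∈ L) (x y : L) :
    sigmaStar L hσ (x + y) = sigmaStar L hσ x + sigmaStar L hσ y := by
  apply Subtype.ext
  simp [sigmaStar_coe, star_add]

lemma sigmaStar_smul {n : ℕ} (L : LieSubalgebra ℂ (Matrix (Fin n) (Fin n) ℂ))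
    (hσ : ∀ x ∈ L, star x ∈ L) (c : ℂ) (y : L) :
    sigmaStar L hσ (c • y) = (starRingEnd ℂ c) • sigmaStar L hσ y := by
  apply Subtype.ext
  show star (c • (y : Matrix (Fin n) (Fin n) ℂ)) = (starRingEnd ℂ) c • star (y : Matrix (Fin n) (Fin n) ℂ)
  rw [star_smul, starRingEnd_apply]

lemma sigmaStar_neg {n : ℕ} (L : LieSubalgebra ℂ (Matrix (Fin n) (Fin n) ℂ))
    (hσ : ∀ x ∈ L, star x ∈ L) (y : L) :
    sigmaStar L hσ (-y) = -sigmaStar L hσ y := by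
  apply Subtype.ext
  simp [sigmaStar_coe]

lemma sigmaStar_lie {n : ℕ} (L : LieSubalgebra ℂ (Matrix (Fin n) (Fin n) ℂ))
    (hσ : ∀ x ∈ L, star x ∈ L) (x y : L) :
    sigmaStar L hσ ⁅x, y⁆ = -⁅sigmaStar L hσ x, sigmaStar L hσ y⁆ := by
  apply Subtype.ext
  simp only [sigmaStar_coe, LieSubalgebra.coe_bracket, Ring.lie_def, star_sub, star_mul,
    NegMemClass.coe_neg]
  abel

/-- Let 𝔤 ⊆ Mₙ(ℂ) be a complex semisimple Lie algebra closed under conjugate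
transpose x ↦ x* =: σ(x), with inner product ⟨x,y⟩ = B(x, y*) (B the Killing
form). For any Lie algebra automorphism φ of 𝔤, its adjoint with respect to
this inner product is σ ∘ φ⁻¹ ∘ σ, which is again a Lie algebra automorphism.
In particular Aut(𝔤) is closed under taking adjoints. -/
theorem stmt_0 {n : ℕ} (L : LieSubalgebra ℂ (Matrix (Fin n) (Fin n) ℂ))
    [FiniteDimensional ℂ L] [LieAlgebra.IsSemisimple ℂ L]
    (hσ : ∀ x ∈ L, star x ∈ L) (φ : L ≃ₗ⁅ℂ⁆ L) :
    ∃ ψ : L ≃ₗ⁅ℂ⁆ L,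
      (∀ y : L, ψ y = sigmaStar L hσ (φ.symm (sigmaStar L hσ y))) ∧
      (∀ x y : L,
        killingForm ℂ L (φ x) (sigmaStar L hσ y) =
          killingForm ℂ L x (sigmaStar L hσ (ψ y))) := by
  have hadd : ∀ a b : L, φ.symm (a + b) = φ.symm a + φ.symm b := fun a b =>
    φ.symm.toLinearEquiv.map_add a b
  have hsmul : ∀ (c : ℂ) (a : L), φ.symm (c • a) = c • φ.symm a := fun c a =>
    φ.symm.toLinearEquiv.map_smul c a
  have hneg : ∀ a : L, φ.symm (-a) = -φ.symm a := fun a =>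
    φ.symm.toLinearEquiv.map_neg a
  refine ⟨{ toFun := fun y => sigmaStar L hσ (φ.symm (sigmaStar L hσ y))
            invFun := fun y => sigmaStar L hσ (φ (sigmaStar L hσ y))
            map_add' := ?_
            map_smul' := ?_
            map_lie' := ?_
            left_inv := ?_
            right_inv := ?_ }, fun y => rfl, ?_⟩
  · intro x y
    show sigmaStar L hσ (φ.symm (sigmaStar L hσ (x + y))) = _
    rw [sigmaStar_add, hadd, sigmaStar_add]
  · intro c y
    show sigmaStar L hσ (φ.symm (sigmaStar L hσ (c • y))) = _
    rw [sigmaStar_smul, hsmul, sigmaStar_smul]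
    simp
  · intro x y
    show sigmaStar L hσ (φ.symm (sigmaStar L hσ ⁅x, y⁆)) =
      ⁅sigmaStar L hσ (φ.symm (sigmaStar L hσ x)), sigmaStar L hσ (φ.symm (sigmaStar L hσ y))⁆
    rw [sigmaStar_lie, hneg, LieEquiv.map_lie φ.symm, sigmaStar_neg,
      sigmaStar_lie, neg_neg]
  · intro y
    simp only
    rw [sigmaStar_sigmaStar, LieEquiv.apply_symm_apply, sigmaStar_sigmaStar]
  · intro y
    simp only
    rw [sigmaStar_sigmaStar, LieEquiv.symm_apply_apply, sigmaStar_sigmaStar]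
  · intro x y
    show killingForm ℂ L (φ x) (sigmaStar L hσ y) =
      killingForm ℂ L x (sigmaStar L hσ (sigmaStar L hσ (φ.symm (sigmaStar L hσ y))))
    rw [sigmaStar_sigmaStar]
    conv_lhs => rw [← LieEquiv.apply_symm_apply φ (sigmaStar L hσ y)]
    rw [LieAlgebra.killingForm_of_equiv_apply]
end

section
/- Let V be a finite-dimensional complex Hilbert space, H ⊆ GL(V) a Zariski-closed reductive subgroup invariant under adjoint, and K = H ∩ U(V). If x ∈ V is critical (⟨Xx,x⟩ = 0 for all X ∈ Lie(H)), then the set of points of the orbit Hx having the same norm as x is exactly the compact orbit Kx: {y ∈ Hx : ‖y‖ = ‖x‖} = Kx. -/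
open Finset in
private lemma KN_expsum_vanish (f : ℝ →₀ ℂ)
    (h : ∀ n : ℕ, (f.sum fun r c => c * Complex.exp (r * n)) = 0) (t : ℝ) :
    (f.sum fun r c => c * Complex.exp (r * t)) = 0 := by
  have hf : ∀ r, f r = 0 := by
    by_contra hc
    push_neg at hc
    obtain ⟨r0, hr0⟩ := hc
    set k := f.support.card with hk
    set e := f.support.equivFin with he
    set v : Fin k → ℂ := fun j => ((Real.exp (e.symm j) : ℝ) : ℂ) with hv
    have hvinj : Function.Injective v := by
      intro i j hij
      simp only [hv] at hij
      have h2 : Real.exp (e.symm i) = Real.exp (e.symm j) := by exact_mod_cast hij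
      have h3 : ((e.symm i : ℝ)) = ((e.symm j : ℝ)) := Real.exp_injective h2
      exact e.symm.injective (Subtype.ext h3)
    set M : Matrix (Fin k) (Fin k) ℂ := (Matrix.vandermonde v).transpose with hM
    have hdet : M.det ≠ 0 := by
      rw [hM, Matrix.det_transpose, Matrix.det_vandermonde]
      refine Finset.prod_ne_zero_iff.mpr fun i _ => Finset.prod_ne_zero_iff.mpr fun j hj => ?_
      refine sub_ne_zero.mpr fun hvv => ?_
      have hji := hvinj hvv
      rw [Finset.mem_Ioi] at hj
      exact absurd hji (ne_of_gt hj)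
    set c : Fin k → ℂ := fun j => f (e.symm j) with hcdef
    have hMc : M.mulVec c = 0 := by
      funext n
      have hn := h n
      rw [Finsupp.sum] at hn
      have hsum : ∑ r ∈ f.support, f r * Complex.exp (r * n) = ∑ j : Fin k, v j ^ (n : ℕ) * c j := by
        rw [← Finset.sum_coe_sort f.support (fun r => f r * Complex.exp ((r : ℝ) * n))]
        refine Fintype.sum_equiv e _ _ fun i => ?_
        rw [hcdef, hv, mul_comm (f _)]
        simp only [Equiv.symm_apply_apply]
        congr 1
        rw [Complex.ofReal_exp, ← Complex.exp_nat_mul]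
        congr 1
        push_cast
        ring
      rw [hsum] at hn
      simpa [Matrix.mulVec, dotProduct, hM, Matrix.transpose_apply,
        Matrix.vandermonde] using hn
    have hc0 : c = 0 := by
      have h1 : M⁻¹ * M = 1 := Matrix.nonsing_inv_mul M (isUnit_iff_ne_zero.mpr hdet)
      calc c = (M⁻¹ * M).mulVec c := by rw [h1, Matrix.one_mulVec]
        _ = M⁻¹.mulVec (M.mulVec c) := by rw [Matrix.mulVec_mulVec]
        _ = 0 := by rw [hMc, Matrix.mulVec_zero]
    have hfr0 : r0 ∈ f.support := Finsupp.mem_support_iff.mpr hr0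
    have hfr : f r0 = c (e ⟨r0, hfr0⟩) := by rw [hcdef]; simp
    rw [hc0] at hfr
    exact hr0 hfr
  have hf0 : f = 0 := Finsupp.ext hf
  rw [hf0, Finsupp.sum_zero_index]


set_option maxHeartbeats 1000000 in
private lemma KN_exp_idem {𝔸 : Type*} [NormedRing 𝔸] [NormedAlgebra ℂ 𝔸] [CompleteSpace 𝔸]
    (P : 𝔸) (hP : P * P = P) (c : ℂ) :
    NormedSpace.exp (c • P) = 1 + (Complex.exp c - 1) • P := by
  have hpow : ∀ m : ℕ, (c • P) ^ (m + 1) = (c ^ (m + 1)) • P := by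
    intro m; induction m with
    | zero => simp
    | succ m ih =>
        rw [pow_succ, ih, smul_mul_smul_comm, hP, ← pow_succ]
  have hsummable := NormedSpace.expSeries_summable' (𝕂 := ℂ) (c • P)
  have hsummableC := NormedSpace.expSeries_summable' (𝕂 := ℂ) c
  have hsumC' : Summable fun n : ℕ => ((n + 1).factorial : ℂ)⁻¹ • c ^ (n + 1) :=
    (summable_nat_add_iff 1).mpr hsummableC
  rw [NormedSpace.exp_eq_tsum ℂ]
  show ∑' n : ℕ, ((n.factorial : ℂ))⁻¹ • (c • P) ^ n = _
  rw [Summable.tsum_eq_zero_add hsummable]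
  have h0 : ((Nat.factorial 0 : ℂ))⁻¹ • (c • P) ^ 0 = 1 := by simp
  rw [h0]
  congr 1
  have hterm : ∀ n : ℕ, ((n + 1).factorial : ℂ)⁻¹ • (c • P) ^ (n + 1)
      = (((n + 1).factorial : ℂ)⁻¹ • c ^ (n + 1)) • P := by
    intro n; rw [hpow n, smul_smul, smul_eq_mul]
  calc ∑' n : ℕ, ((n + 1).factorial : ℂ)⁻¹ • (c • P) ^ (n + 1)
      = ∑' n : ℕ, (((n + 1).factorial : ℂ)⁻¹ • c ^ (n + 1)) • P := by
        exact tsum_congr hterm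
    _ = (∑' n : ℕ, ((n + 1).factorial : ℂ)⁻¹ • c ^ (n + 1)) • P := by
        exact Summable.tsum_smul_const hsumC' P
    _ = (Complex.exp c - 1) • P := by
        congr 1
        have : Complex.exp c = ∑' n : ℕ, ((n.factorial : ℂ))⁻¹ • c ^ n := by
          rw [Complex.exp_eq_exp_ℂ, NormedSpace.exp_eq_tsum ℂ]
        rw [this, Summable.tsum_eq_zero_add hsummableC]
        simp

private lemma KN_exp_orth {ι : Type*} [DecidableEq ι] {𝔸 : Type*} [NormedRing 𝔸] [NormedAlgebra ℂ 𝔸]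
    [CompleteSpace 𝔸] (s : Finset ι) (P : ι → 𝔸)
    (hP : ∀ i ∈ s, ∀ j ∈ s, P i * P j = if i = j then P i else 0) (c : ι → ℂ) :
    NormedSpace.exp (∑ i ∈ s, c i • P i)
      = 1 + ∑ i ∈ s, (Complex.exp (c i) - 1) • P i := by
  induction s using Finset.induction with
  | empty => simp
  | @insert a s ha ih =>
      have hPa : P a * P a = P a := by
        simpa using hP a (Finset.mem_insert_self a s) a (Finset.mem_insert_self a s)
      have horth : ∀ i ∈ s, P a * P i = 0 ∧ P i * P a = 0 := by
        intro i hi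
        have hai : a ≠ i := fun h => ha (h ▸ hi)
        constructor
        · have := hP a (Finset.mem_insert_self a s) i (Finset.mem_insert_of_mem hi)
          simpa [hai] using this
        · have := hP i (Finset.mem_insert_of_mem hi) a (Finset.mem_insert_self a s)
          simpa [hai.symm] using this
      have hcomm : Commute (c a • P a) (∑ i ∈ s, c i • P i) := by
        apply Commute.smul_left
        apply Commute.sum_right
        intro i hi
        apply Commute.smul_right
        unfold Commute SemiconjBy
        rw [(horth i hi).1, (horth i hi).2]
      rw [Finset.sum_insert ha, NormedSpace.exp_add_of_commute_of_mem_ball (𝕂 := ℂ) hcomm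
          (by rw [NormedSpace.expSeries_radius_eq_top ℂ 𝔸, Metric.eball_top_eq_univ]; exact Set.mem_univ _)
          (by rw [NormedSpace.expSeries_radius_eq_top ℂ 𝔸, Metric.eball_top_eq_univ]; exact Set.mem_univ _),
        KN_exp_idem (P a) hPa (c a),
        ih (fun i hi j hj => hP i (Finset.mem_insert_of_mem hi) j (Finset.mem_insert_of_mem hj)),
        Finset.sum_insert ha]
      have hzero : (P a) * (∑ i ∈ s, (Complex.exp (c i) - 1) • P i) = 0 := by
        rw [Finset.mul_sum]
        refine Finset.sum_eq_zero fun i hi => ?_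
        rw [mul_smul_comm, (horth i hi).1, smul_zero]
      rw [mul_add, add_mul, add_mul, mul_one, one_mul, smul_mul_assoc, smul_mul_assoc,
        hzero, smul_zero, mul_one]
      abel

private noncomputable def KNPhi : AddMonoidAlgebra ℂ ℝ →ₐ[ℂ] (ℝ → ℂ) :=
  AddMonoidAlgebra.lift ℂ (ℝ → ℂ) ℝ
    { toFun := fun r t => Complex.exp ((r.toAdd : ℝ) * t)
      map_one' := by
        funext t
        simp
      map_mul' := by
        intro a b
        funext t
        show Complex.exp (((a.toAdd + b.toAdd : ℝ) : ℂ) * t) = _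
        push_cast
        rw [add_mul, Complex.exp_add]
        rfl }

private lemma KNPhi_apply (f : AddMonoidAlgebra ℂ ℝ) (t : ℝ) :
    KNPhi f t = f.coeff.sum fun r c => c * Complex.exp (r * t) := by
  rw [KNPhi, AddMonoidAlgebra.lift_apply]
  rw [Finsupp.sum, Finsupp.sum, Finset.sum_apply]
  refine Finset.sum_congr rfl fun r _ => ?_
  rfl

set_option maxHeartbeats 2000000
lemma KNPhi_single (r : ℝ) (c : ℂ) (t : ℝ) :
    KNPhi (AddMonoidAlgebra.single r c) t = c * Complex.exp (r * t) := by
  rw [KNPhi_apply, AddMonoidAlgebra.coeff_single, Finsupp.sum_single_index]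
  simp

open scoped ComplexInnerProductSpace in
/-- Kempf–Ness, part 2: let V be a finite-dimensional complex Hilbert space,
H ⊆ GL(V) a Zariski-closed (reductive) subgroup invariant under adjoint, and
K = H ∩ U(V) the subgroup of unitary elements of H. If x ∈ V is critical
(⟪X x, x⟫ = 0 for all X ∈ Lie(H)), then
{y ∈ Hx : ‖y‖ = ‖x‖} = Kx. -/
theorem stmt_6 {V : Type*} [NormedAddCommGroup V] [InnerProductSpace ℂ V]
    [FiniteDimensional ℂ V]
    (H : Subgroup ((V →L[ℂ] V)ˣ))
    (hZar : ∃ P : Set ((V →L[ℂ] V) → ℂ),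
      (∀ p ∈ P, p ∈ Algebra.adjoin ℂ
        {f : (V →L[ℂ] V) → ℂ | ∃ l : (V →L[ℂ] V) →ₗ[ℂ] ℂ, ⇑l = f}) ∧
      {a : V →L[ℂ] V | ∃ u ∈ H, (u : V →L[ℂ] V) = a} =
        {a : V →L[ℂ] V | IsUnit a ∧ ∀ p ∈ P, p a = 0})
    (hstar : ∀ u ∈ H, ∃ v ∈ H,
      (v : V →L[ℂ] V) = ContinuousLinearMap.adjoint (u : V →L[ℂ] V))
    (x : V)
    (hcrit : ∀ X : V →L[ℂ] V,
      (∀ t : ℝ, ∃ u ∈ H, (u : V →L[ℂ] V) = NormedSpace.exp ((t : ℂ) • X)) →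
      ⟪X x, x⟫ = 0) :
    {y : V | (∃ h ∈ H, (h : V →L[ℂ] V) x = y) ∧ ‖y‖ = ‖x‖} =
      {y : V | ∃ k ∈ H,
        ContinuousLinearMap.adjoint (k : V →L[ℂ] V) * (k : V →L[ℂ] V) = 1 ∧
        (k : V →L[ℂ] V) x = y} := by
  obtain ⟨Pset, hPgen, hPeq⟩ := hZar
  ext y
  simp only [Set.mem_setOf_eq]
  constructor
  · rintro ⟨⟨h₀, h₀H, rfl⟩, hnorm⟩
    set A : V →L[ℂ] V := (h₀ : V →L[ℂ] V) with hA
    obtain ⟨v₀, v₀H, hv₀⟩ := hstar h₀ h₀H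
    set T : V →L[ℂ] V := ContinuousLinearMap.adjoint A * A with hTdef
    have hTu : ((v₀ * h₀ : (V →L[ℂ] V)ˣ) : V →L[ℂ] V) = T := by
      rw [Units.val_mul, hv₀]
    have hTsym : (T : V →ₗ[ℂ] V).IsSymmetric := by
      rw [← ContinuousLinearMap.isSelfAdjoint_iff_isSymmetric]
      rw [IsSelfAdjoint, hTdef, star_mul, ContinuousLinearMap.star_eq_adjoint,
        ContinuousLinearMap.star_eq_adjoint, ContinuousLinearMap.adjoint_adjoint]
    set n := Module.finrank ℂ V with hn
    set b := hTsym.eigenvectorBasis rfl with hb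
    set μ := hTsym.eigenvalues rfl with hμ
    have happ : ∀ i, T (b i) = ((μ i : ℝ) : ℂ) • b i := fun i =>
      hTsym.apply_eigenvectorBasis rfl i
    have hAinj : ∀ v : V, A v = 0 → v = 0 := by
      intro v hv
      have : ((h₀⁻¹ : (V →L[ℂ] V)ˣ) : V →L[ℂ] V) (A v) = v := by
        rw [← ContinuousLinearMap.mul_apply, ← Units.val_mul, inv_mul_cancel]
        simp
      rw [hv] at this
      simpa using this.symm
    have hbnorm : ∀ i, ⟪b i, b i⟫ = 1 := by
      intro i
      rw [inner_self_eq_norm_sq_to_K, b.orthonormal.1 i]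
      simp
    have hμpos : ∀ i, 0 < μ i := by
      intro i
      have h1 : ⟪T (b i), b i⟫ = ((μ i : ℝ) : ℂ) := by
        rw [happ, inner_smul_left, hbnorm]
        simp [Complex.conj_ofReal]
      have h2 : ⟪T (b i), b i⟫ = ((‖A (b i)‖ : ℝ) : ℂ) ^ 2 := by
        rw [hTdef, ContinuousLinearMap.mul_apply, ContinuousLinearMap.adjoint_inner_left,
          inner_self_eq_norm_sq_to_K]
        norm_num
      have h3 : (μ i : ℝ) = ‖A (b i)‖ ^ 2 := by
        have := h1.symm.trans h2
        exact_mod_cast this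
      rw [h3]
      have hbne : A (b i) ≠ 0 := by
        intro hc
        have := hAinj (b i) hc
        have hb1 := b.orthonormal.1 i
        rw [this] at hb1
        simp at hb1
      exact pow_pos (norm_pos_iff.mpr hbne) 2
    set P : Fin n → (V →L[ℂ] V) := fun i => (innerSL ℂ (b i)).smulRight (b i) with hPdef
    have hPapply : ∀ i v, P i v = ⟪b i, v⟫ • b i := fun i v => rfl
    have hiprod : ∀ i j, ⟪b i, b j⟫ = if i = j then 1 else 0 := fun i j =>
      orthonormal_iff_ite.mp b.orthonormal i j
    have hPb : ∀ i j, P i (b j) = if i = j then b i else 0 := by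
      intro i j
      rw [hPapply, hiprod]
      split <;> simp
    have hPP : ∀ i j, P i * P j = if i = j then P i else 0 := by
      intro i j
      ext v
      rw [ContinuousLinearMap.mul_apply, hPapply j, map_smul, hPb]
      split
      · subst ‹i = j›; rw [hPapply]
      · simp
    have hsum1 : ∑ i, P i = 1 := by
      ext v
      rw [ContinuousLinearMap.sum_apply, ContinuousLinearMap.one_apply]
      have := b.sum_repr v
      simp_rw [b.repr_apply_apply] at this
      simpa [hPapply] using this
    set F : ℝ → (V →L[ℂ] V) := fun t => ∑ i, ((μ i ^ t : ℝ) : ℂ) • P i with hFdef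
    have hF0 : F 0 = 1 := by
      rw [hFdef]
      simp only [Real.rpow_zero, Complex.ofReal_one, one_smul]
      exact hsum1
    have hFmul : ∀ s t : ℝ, F s * F t = F (s + t) := by
      intro s t
      rw [hFdef]
      show (∑ i, ((μ i ^ s : ℝ) : ℂ) • P i) * (∑ j, ((μ j ^ t : ℝ) : ℂ) • P j) = _
      rw [Finset.sum_mul_sum]
      refine Finset.sum_congr rfl fun i _ => ?_
      rw [Finset.sum_eq_single i]
      · rw [smul_mul_smul_comm, hPP, if_pos rfl, ← Complex.ofReal_mul,
          ← Real.rpow_add (hμpos i)]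
      · intro j _ hj
        rw [smul_mul_smul_comm, hPP, if_neg (fun hc => hj hc.symm), smul_zero]
      · intro hc
        exact absurd (Finset.mem_univ i) hc
    have hF1 : F 1 = T := by
      ext v
      conv_rhs => rw [← b.sum_repr v]
      simp_rw [b.repr_apply_apply]
      rw [hFdef, ContinuousLinearMap.sum_apply, map_sum]
      refine Finset.sum_congr rfl fun i _ => ?_
      rw [ContinuousLinearMap.smul_apply, hPapply, map_smul, happ, Real.rpow_one,
        smul_smul, smul_smul, mul_comm]
    have hFn : ∀ m : ℕ, F (m : ℝ) = T ^ m := by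
      intro m
      induction m with
      | zero => simpa using hF0
      | succ m ih =>
          rw [pow_succ, ← ih, ← hF1, hFmul]
          norm_num
    have hPadj : ∀ i, star (P i) = P i := by
      intro i
      have h1 : P i = ContinuousLinearMap.adjoint (P i) := by
        rw [ContinuousLinearMap.eq_adjoint_iff]
        intro u z
        rw [hPapply, hPapply, inner_smul_left, inner_smul_right, inner_conj_symm]
        ring
      rw [ContinuousLinearMap.star_eq_adjoint, ← h1]
    have hFadj : ∀ t, ContinuousLinearMap.adjoint (F t) = F t := by
      intro t
      rw [← ContinuousLinearMap.star_eq_adjoint, hFdef, star_sum]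
      refine Finset.sum_congr rfl fun i _ => ?_
      rw [star_smul, hPadj, Complex.star_def, Complex.conj_ofReal]
    have hrpow : ∀ (i : Fin n) (s : ℝ),
        ((μ i ^ s : ℝ) : ℂ) = Complex.exp ((Real.log (μ i) : ℂ) * (s : ℂ)) := by
      intro i s
      rw [Real.rpow_def_of_pos (hμpos i), Complex.ofReal_exp, Complex.ofReal_mul]
    have hTmH : ∀ m : ℕ, ∃ u ∈ H, (u : V →L[ℂ] V) = T ^ m := by
      intro m
      refine ⟨(v₀ * h₀) ^ m, H.pow_mem (H.mul_mem v₀H h₀H) m, ?_⟩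
      rw [Units.val_pow_eq_pow_val, hTu]
    have hFunit : ∀ t : ℝ, IsUnit (F t) := by
      intro t
      refine ⟨⟨F t, F (-t), ?_, ?_⟩, rfl⟩
      · rw [hFmul, add_neg_cancel, hF0]
      · rw [hFmul, neg_add_cancel, hF0]
    have hFH : ∀ t : ℝ, ∃ u ∈ H, (u : V →L[ℂ] V) = F t := by
      intro t
      have hmem : F t ∈ {a : V →L[ℂ] V | ∃ u ∈ H, (u : V →L[ℂ] V) = a} := by
        rw [hPeq]
        refine ⟨hFunit t, fun p hp => ?_⟩
        have hQ : ∃ f : AddMonoidAlgebra ℂ ℝ, ∀ s : ℝ, p (F s) = KNPhi f s := by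
          refine Algebra.adjoin_induction
            (p := fun q _ => ∃ f : AddMonoidAlgebra ℂ ℝ, ∀ s : ℝ, q (F s) = KNPhi f s)
            ?_ ?_ ?_ ?_ (hPgen p hp)
          · rintro q ⟨l, rfl⟩
            refine ⟨∑ i, AddMonoidAlgebra.single (Real.log (μ i)) (l (P i)), fun s => ?_⟩
            simp only [hFdef]
            rw [map_sum, map_sum, Finset.sum_apply]
            refine Finset.sum_congr rfl fun i _ => ?_
            rw [map_smul, smul_eq_mul, KNPhi_single, hrpow, mul_comm]
          · intro r
            refine ⟨AddMonoidAlgebra.single 0 r, fun s => ?_⟩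
            rw [KNPhi_single]
            simp [Pi.algebraMap_apply]
          · rintro q₁ q₂ - - ⟨f₁, hf₁⟩ ⟨f₂, hf₂⟩
            exact ⟨f₁ + f₂, fun s => by
              rw [Pi.add_apply, hf₁, hf₂, map_add, Pi.add_apply]⟩
          · rintro q₁ q₂ - - ⟨f₁, hf₁⟩ ⟨f₂, hf₂⟩
            exact ⟨f₁ * f₂, fun s => by
              rw [Pi.mul_apply, hf₁, hf₂, map_mul, Pi.mul_apply]⟩
        obtain ⟨f, hf⟩ := hQ
        have hzero : ∀ m : ℕ, (f.coeff.sum fun r c => c * Complex.exp (r * m)) = 0 := by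
          intro m
          have h1 : KNPhi f (m : ℝ) = 0 := by
            rw [← hf]
            obtain ⟨u, uH, hu⟩ := hTmH m
            have hmem2 : F (m : ℝ) ∈ {a : V →L[ℂ] V | ∃ u ∈ H, (u : V →L[ℂ] V) = a} :=
              ⟨u, uH, by rw [hu, hFn]⟩
            rw [hPeq] at hmem2
            exact hmem2.2 p hp
          rw [KNPhi_apply] at h1
          push_cast at h1 ⊢
          exact h1
        have hv := KN_expsum_vanish f.coeff hzero t
        rw [← KNPhi_apply, ← hf] at hv
        exact hv
      exact hmem
    set X : V →L[ℂ] V := ∑ i, ((Real.log (μ i) : ℝ) : ℂ) • P i with hXdef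
    have hexpX : ∀ t : ℝ, NormedSpace.exp ((t : ℂ) • X) = F t := by
      intro t
      have h1 : (t : ℂ) • X = ∑ i, ((Real.log (μ i) : ℂ) * (t : ℂ)) • P i := by
        rw [hXdef, Finset.smul_sum]
        refine Finset.sum_congr rfl fun i _ => ?_
        rw [smul_smul, mul_comm]
      rw [h1, KN_exp_orth Finset.univ P (fun i _ j _ => hPP i j), hFdef, ← hsum1,
        ← Finset.sum_add_distrib]
      refine Finset.sum_congr rfl fun i _ => ?_
      rw [← hrpow, sub_smul, one_smul, add_comm, sub_add_cancel]
    have hXx : ⟪X x, x⟫ = 0 := by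
      refine hcrit X fun t => ?_
      obtain ⟨u, uH, hu⟩ := hFH t
      exact ⟨u, uH, by rw [hu, hexpX]⟩
    set w : Fin n → ℝ := fun i => Complex.normSq ⟪b i, x⟫ with hwdef
    have hinner_sum : ∀ c : Fin n → ℝ,
        ⟪(∑ i, ((c i : ℝ) : ℂ) • P i) x, x⟫ = ((∑ i, c i * w i : ℝ) : ℂ) := by
      intro c
      rw [ContinuousLinearMap.sum_apply, sum_inner, Complex.ofReal_sum]
      refine Finset.sum_congr rfl fun i _ => ?_
      rw [ContinuousLinearMap.smul_apply, hPapply, inner_smul_left, inner_smul_left,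
        Complex.conj_ofReal]
      have h2 : (starRingEnd ℂ) ⟪b i, x⟫ * ⟪b i, x⟫ = ((w i : ℝ) : ℂ) := by
        rw [mul_comm, Complex.mul_conj, hwdef]
      rw [h2, ← Complex.ofReal_mul]
    have hwnn : ∀ i, 0 ≤ w i := fun i => Complex.normSq_nonneg _
    have e1 : ∑ i, Real.log (μ i) * w i = 0 := by
      have h1 := hinner_sum fun i => Real.log (μ i)
      rw [← hXdef] at h1
      rw [h1] at hXx
      exact_mod_cast hXx
    have e2 : ∑ i, μ i * w i = ∑ i, w i := by
      have hTx : ⟪T x, x⟫ = ((∑ i, μ i * w i : ℝ) : ℂ) := by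
        rw [← hF1]
        have h1 := hinner_sum μ
        rw [← h1, hFdef]
        simp [Real.rpow_one]; rfl
      have hxx : ⟪x, x⟫ = ((∑ i, w i : ℝ) : ℂ) := by
        have h1 := hinner_sum fun _ => (1 : ℝ)
        simp only [Complex.ofReal_one, one_smul, one_mul] at h1
        rw [hsum1] at h1
        simpa using h1
      have hAx : ⟪T x, x⟫ = ⟪x, x⟫ := by
        rw [hTdef, ContinuousLinearMap.mul_apply, ContinuousLinearMap.adjoint_inner_left,
          inner_self_eq_norm_sq_to_K, inner_self_eq_norm_sq_to_K, hnorm]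
      rw [hTx, hxx] at hAx
      exact_mod_cast hAx
    have e3 : ∑ i, (μ i - 1 - Real.log (μ i)) * w i = 0 := by
      have : ∀ i, (μ i - 1 - Real.log (μ i)) * w i
          = (μ i * w i - w i) - Real.log (μ i) * w i := by
        intro i; ring
      rw [Finset.sum_congr rfl fun i _ => this i, Finset.sum_sub_distrib,
        Finset.sum_sub_distrib, e1, e2]
      ring
    have hnn : ∀ i ∈ Finset.univ, 0 ≤ (μ i - 1 - Real.log (μ i)) * w i := by
      intro i _
      have := Real.log_le_sub_one_of_pos (hμpos i)
      have h2 : 0 ≤ μ i - 1 - Real.log (μ i) := by linarith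
      exact mul_nonneg h2 (hwnn i)
    have hkey : ∀ i, μ i = 1 ∨ ⟪b i, x⟫ = 0 := by
      intro i
      have hterm := (Finset.sum_eq_zero_iff_of_nonneg hnn).mp e3 i (Finset.mem_univ i)
      by_cases hμ1 : μ i = 1
      · exact Or.inl hμ1
      · right
        have hlt := Real.log_lt_sub_one_of_pos (hμpos i) hμ1
        have h2 : 0 < μ i - 1 - Real.log (μ i) := by linarith
        have hw0 : w i = 0 := by
          rcases mul_eq_zero.mp hterm with h | h
          · linarith
          · exact h
        rw [hwdef] at hw0
        exact Complex.normSq_eq_zero.mp hw0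
    have hFx : ∀ t, F t x = x := by
      intro t
      rw [hFdef]
      conv_rhs => rw [← b.sum_repr x]
      simp_rw [b.repr_apply_apply]
      rw [ContinuousLinearMap.sum_apply]
      refine Finset.sum_congr rfl fun i _ => ?_
      rw [ContinuousLinearMap.smul_apply, hPapply]
      rcases hkey i with h1 | h2
      · rw [h1, Real.one_rpow]; simp
      · rw [h2]; simp
    obtain ⟨u', u'H, hu'⟩ := hFH (-(1/2 : ℝ))
    refine ⟨h₀ * u', H.mul_mem h₀H u'H, ?_, ?_⟩
    · rw [Units.val_mul, hu']
      rw [← ContinuousLinearMap.star_eq_adjoint, star_mul,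
        ContinuousLinearMap.star_eq_adjoint, ContinuousLinearMap.star_eq_adjoint,
        hFadj]
      calc F (-(1/2:ℝ)) * ContinuousLinearMap.adjoint A * (A * F (-(1/2:ℝ)))
          = F (-(1/2:ℝ)) * (T * F (-(1/2:ℝ))) := by
            rw [hTdef, mul_assoc, ← mul_assoc (ContinuousLinearMap.adjoint A) A]
        _ = F (-(1/2:ℝ)) * (F 1 * F (-(1/2:ℝ))) := by rw [hF1]
        _ = 1 := by rw [hFmul, hFmul, ← hF0]; norm_num
    · rw [Units.val_mul, hu', ContinuousLinearMap.mul_apply, hFx]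
  · rintro ⟨k, kH, hk, rfl⟩
    refine ⟨⟨k, kH, rfl⟩, ?_⟩
    have h1 : ⟪(k : V →L[ℂ] V) x, (k : V →L[ℂ] V) x⟫ = ⟪x, x⟫ := by
      rw [← ContinuousLinearMap.adjoint_inner_left, ← ContinuousLinearMap.mul_apply, hk,
        ContinuousLinearMap.one_apply]
    rw [inner_self_eq_norm_sq_to_K, inner_self_eq_norm_sq_to_K] at h1
    have h2 : ‖(k : V →L[ℂ] V) x‖ ^ 2 = ‖x‖ ^ 2 := by exact_mod_cast h1
    have := congrArg Real.sqrt h2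
    simpa [Real.sqrt_sq, norm_nonneg] using this
end

section
/- In ℂ³ ⊗ ℂ³ ⊗ ℂ³ define the bracket [x₁⊗x₂⊗x₃, y₁⊗y₂⊗y₃] = (x₁∧y₁) ⊗ (x₂∧y₂) ⊗ (x₃∧y₃) with values in Λ²ℂ³ ⊗ Λ²ℂ³ ⊗ Λ²ℂ³. Let v₁ = e₁⊗e₁⊗e₁ + e₂⊗e₂⊗e₂ + e₃⊗e₃⊗e₃, v₂ = e₁⊗e₂⊗e₃ + e₃⊗e₁⊗e₂ + e₂⊗e₃⊗e₁, v₃ = e₃⊗e₂⊗e₁ + e₁⊗e₃⊗e₂ + e₂⊗e₁⊗e₃. Then [v_i, v_j] = 0 for all i, j ∈ {1,2,3}. -/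
noncomputable section
open TensorProduct

abbrev V₃ : Type := Fin 3 → ℂ

abbrev T₃ : Type := V₃ ⊗[ℂ] (V₃ ⊗[ℂ] V₃)

/-- standard basis of ℂ³ -/
def e₃ (i : Fin 3) : V₃ := Pi.single i 1

/-- pure tensor x ⊗ y ⊗ z -/
def pt (x y z : V₃) : T₃ := x ⊗ₜ[ℂ] (y ⊗ₜ[ℂ] z)

/-- the wedge x ∧ y, viewed in the exterior algebra of ℂ³ -/
def wdg (x y : V₃) : ExteriorAlgebra ℂ V₃ :=
  ExteriorAlgebra.ι ℂ x * ExteriorAlgebra.ι ℂ y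

def v₁ : T₃ := pt (e₃ 0) (e₃ 0) (e₃ 0) + pt (e₃ 1) (e₃ 1) (e₃ 1) + pt (e₃ 2) (e₃ 2) (e₃ 2)
def v₂ : T₃ := pt (e₃ 0) (e₃ 1) (e₃ 2) + pt (e₃ 2) (e₃ 0) (e₃ 1) + pt (e₃ 1) (e₃ 2) (e₃ 0)
def v₃ : T₃ := pt (e₃ 2) (e₃ 1) (e₃ 0) + pt (e₃ 0) (e₃ 2) (e₃ 1) + pt (e₃ 1) (e₃ 0) (e₃ 2)

lemma wdg_self (x : V₃) : wdg x x = 0 := by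
  simp [wdg, ExteriorAlgebra.ι_sq_zero]

lemma wdg_anti (x y : V₃) : wdg y x = - wdg x y := by
  have h := ExteriorAlgebra.ι_sq_zero (R := ℂ) (x + y)
  have hx := ExteriorAlgebra.ι_sq_zero (R := ℂ) x
  have hy := ExteriorAlgebra.ι_sq_zero (R := ℂ) y
  simp only [map_add, add_mul, mul_add, hx, hy, zero_add, add_zero] at h
  unfold wdg
  exact eq_neg_of_add_eq_zero_left h

set_option maxHeartbeats 1000000 in
set_option synthInstance.maxHeartbeats 400000 in
/-- For the bilinear bracket `[x₁⊗x₂⊗x₃, y₁⊗y₂⊗y₃] = (x₁∧y₁)⊗(x₂∧y₂)⊗(x₃∧y₃)`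
on ℂ³⊗ℂ³⊗ℂ³, the elements v₁, v₂, v₃ pairwise commute: `[vᵢ, vⱼ] = 0`. -/
theorem stmt_8
    (B : T₃ →ₗ[ℂ] T₃ →ₗ[ℂ]
      (ExteriorAlgebra ℂ V₃ ⊗[ℂ] (ExteriorAlgebra ℂ V₃ ⊗[ℂ] ExteriorAlgebra ℂ V₃)))
    (hB : ∀ x₁ x₂ x₃ y₁ y₂ y₃ : V₃,
      B (pt x₁ x₂ x₃) (pt y₁ y₂ y₃) =
        wdg x₁ y₁ ⊗ₜ[ℂ] (wdg x₂ y₂ ⊗ₜ[ℂ] wdg x₃ y₃)) :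
    ∀ i j : Fin 3, B (![v₁, v₂, v₃] i) (![v₁, v₂, v₃] j) = 0 := by
  have h10 : wdg (e₃ 1) (e₃ 0) = - wdg (e₃ 0) (e₃ 1) := wdg_anti _ _
  have h20 : wdg (e₃ 2) (e₃ 0) = - wdg (e₃ 0) (e₃ 2) := wdg_anti _ _
  have h21 : wdg (e₃ 2) (e₃ 1) = - wdg (e₃ 1) (e₃ 2) := wdg_anti _ _
  have key : ∀ a b : T₃,
      (a = v₁ ∨ a = v₂ ∨ a = v₃) → (b = v₁ ∨ b = v₂ ∨ b = v₃) → B a b = 0 := by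
    rintro a b (rfl | rfl | rfl) (rfl | rfl | rfl) <;>
      simp only [v₁, v₂, v₃, map_add, LinearMap.add_apply, hB, wdg_self,
        h10, h20, h21, TensorProduct.zero_tmul, TensorProduct.tmul_zero,
        neg_tmul, tmul_neg, neg_neg, add_zero, zero_add] <;>
      abel
  intro i j
  fin_cases i <;> fin_cases j <;>
    exact key _ _ (by simp) (by simp)
end
end
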